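/- Let f and g be three times differentiable real functions, with g mapping its domain into the domain of f, such that f′ > 0, f″ ≤ 0, f‴ ≥ 0 and g′ > 0, g″ ≤ 0, g‴ ≥ 0 on their domains. Then the composition f ∘ g satisfies (f ∘ g)′ > 0, (f ∘ g)″ ≤ 0 and (f ∘ g)‴ ≥ 0; i.e., the class 𝔽_TSD of functions inducing third order stochastic dominance is composition-consistent. -/

import Mathlib

open Set Real

noncomputable section

/-- the defining properties of `𝔽_TSD` (positive first derivative,
nonpositive second derivative, nonnegative third derivative) are preserved under
composition, i.e. `𝔽_TSD` is composition-consistent. -/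
theorem stmt17 (f g : ℝ → ℝ) (s t : Set ℝ) (hs : IsOpen s) (ht : IsOpen t)
    (hmaps : ∀ x ∈ t, g x ∈ s)
    -- three times differentiability
    (hf1 : ∀ x ∈ s, DifferentiableAt ℝ f x)
    (hf2 : ∀ x ∈ s, DifferentiableAt ℝ (deriv f) x)
    (hf3 : ∀ x ∈ s, DifferentiableAt ℝ (deriv (deriv f)) x)
    (hg1 : ∀ x ∈ t, DifferentiableAt ℝ g x)
    (hg2 : ∀ x ∈ t, DifferentiableAt ℝ (deriv g) x)
    (hg3 : ∀ x ∈ t, DifferentiableAt ℝ (deriv (deriv g)) x)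
    -- sign conditions: f′ > 0, f″ ≤ 0, f‴ ≥ 0 on s, and likewise for g on t
    (hf1' : ∀ x ∈ s, 0 < deriv f x)
    (hf2' : ∀ x ∈ s, deriv (deriv f) x ≤ 0)
    (hf3' : ∀ x ∈ s, 0 ≤ deriv (deriv (deriv f)) x)
    (hg1' : ∀ x ∈ t, 0 < deriv g x)
    (hg2' : ∀ x ∈ t, deriv (deriv g) x ≤ 0)
    (hg3' : ∀ x ∈ t, 0 ≤ deriv (deriv (deriv g)) x) :
    ∀ x ∈ t, 0 < deriv (f ∘ g) x ∧ deriv (deriv (f ∘ g)) x ≤ 0 ∧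
      0 ≤ deriv (deriv (deriv (f ∘ g))) x := by
  -- differentiability of composite pieces
  have hd_f'g : ∀ y ∈ t, DifferentiableAt ℝ (fun z => deriv f (g z)) y := fun y hy =>
    (hf2 _ (hmaps y hy)).comp y (hg1 y hy)
  have hd_f''g : ∀ y ∈ t, DifferentiableAt ℝ (fun z => deriv (deriv f) (g z)) y := fun y hy =>
    (hf3 _ (hmaps y hy)).comp y (hg1 y hy)
  -- first derivative formula
  set F1 : ℝ → ℝ := fun y => deriv f (g y) * deriv g y with hF1def
  have hA : ∀ y ∈ t, deriv (f ∘ g) y = F1 y := fun y hy =>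
    deriv_comp y (hf1 _ (hmaps y hy)) (hg1 y hy)
  -- second derivative formula
  set F2 : ℝ → ℝ := fun y =>
    (deriv (deriv f) (g y) * deriv g y) * deriv g y + deriv f (g y) * deriv (deriv g) y
    with hF2def
  have hB0 : ∀ y ∈ t, deriv F1 y = F2 y := by
    intro y hy
    have h1 := deriv_fun_mul (hd_f'g y hy) (hg2 y hy)
    have h2 : deriv (fun z => deriv f (g z)) y = deriv (deriv f) (g y) * deriv g y :=
      deriv_comp y (hf2 _ (hmaps y hy)) (hg1 y hy)
    simp only [hF1def, hF2def, h1, h2]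
  have hB : ∀ y ∈ t, deriv (deriv (f ∘ g)) y = F2 y := by
    intro y hy
    have hev : deriv (f ∘ g) =ᶠ[nhds y] F1 :=
      Filter.eventuallyEq_of_mem (ht.mem_nhds hy) (fun z hz => hA z hz)
    exact hev.deriv_eq.trans (hB0 y hy)
  -- third derivative formula
  have hC : ∀ y ∈ t, deriv (deriv (deriv (f ∘ g))) y = deriv F2 y := by
    intro y hy
    have hev : deriv (deriv (f ∘ g)) =ᶠ[nhds y] F2 :=
      Filter.eventuallyEq_of_mem (ht.mem_nhds hy) (fun z hz => hB z hz)
    exact hev.deriv_eq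
  intro x hx
  have hgx := hmaps x hx
  -- notation for values
  have ha := hg1' x hx
  have hb := hg2' x hx
  have hc := hg3' x hx
  have hA' := hf1' _ hgx
  have hB' := hf2' _ hgx
  have hC' := hf3' _ hgx
  -- compute deriv F2 x
  have hT1 : DifferentiableAt ℝ (fun z => deriv (deriv f) (g z) * deriv g z) x :=
    (hd_f''g x hx).mul (hg2 x hx)
  have hT1' : DifferentiableAt ℝ
      (fun z => (deriv (deriv f) (g z) * deriv g z) * deriv g z) x :=
    hT1.mul (hg2 x hx)
  have hT2 : DifferentiableAt ℝ (fun z => deriv f (g z) * deriv (deriv g) z) x :=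
    (hd_f'g x hx).mul (hg3 x hx)
  have hder1 : deriv (fun z => deriv (deriv f) (g z)) x
      = deriv (deriv (deriv f)) (g x) * deriv g x :=
    deriv_comp x (hf3 _ hgx) (hg1 x hx)
  have hder2 : deriv (fun z => deriv f (g z)) x = deriv (deriv f) (g x) * deriv g x :=
    deriv_comp x (hf2 _ hgx) (hg1 x hx)
  have hdF2 : deriv F2 x =
      ((deriv (deriv (deriv f)) (g x) * deriv g x * deriv g x
        + deriv (deriv f) (g x) * deriv (deriv g) x) * deriv g x
        + (deriv (deriv f) (g x) * deriv g x) * deriv (deriv g) x)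
      + ((deriv (deriv f) (g x) * deriv g x) * deriv (deriv g) x
        + deriv f (g x) * deriv (deriv (deriv g)) x) := by
    have h0 : deriv F2 x
        = deriv (fun z => (deriv (deriv f) (g z) * deriv g z) * deriv g z) x
        + deriv (fun z => deriv f (g z) * deriv (deriv g) z) x := by
      simp only [hF2def]
      exact deriv_add hT1' hT2
    rw [h0, deriv_fun_mul hT1 (hg2 x hx), deriv_fun_mul (hd_f''g x hx) (hg2 x hx),
      deriv_fun_mul (hd_f'g x hx) (hg3 x hx), hder1, hder2]
  refine ⟨?_, ?_, ?_⟩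
  · rw [hA x hx]
    exact mul_pos hA' ha
  · rw [hB x hx]
    simp only [hF2def]
    have h1 : deriv (deriv f) (g x) * deriv g x * deriv g x ≤ 0 :=
      mul_nonpos_iff.2 (Or.inr ⟨mul_nonpos_iff.2 (Or.inr ⟨hB', ha.le⟩), ha.le⟩)
    have h2 : deriv f (g x) * deriv (deriv g) x ≤ 0 :=
      mul_nonpos_iff.2 (Or.inl ⟨hA'.le, hb⟩)
    linarith
  · rw [hC x hx, hdF2]
    nlinarith [mul_nonneg (mul_nonneg (mul_nonneg hC' ha.le) ha.le) ha.le,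
      mul_nonneg (mul_nonneg (neg_nonneg.2 hB') (neg_nonneg.2 hb)) ha.le,
      mul_nonneg (neg_nonneg.2 (mul_nonpos_iff.2 (Or.inr ⟨hB', ha.le⟩))) (neg_nonneg.2 hb),
      mul_nonneg hA'.le hc]
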